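/- Let (z₁,y₁),…,(z_m,y_m) with z₁ ≤ … ≤ z_m be input to LPAV, producing fitted values ŷ₁,…,ŷ_m (the minimizer of ∑(ŷᵢ-yᵢ)² subject to ŷᵢ₊₁-ŷᵢ ≥ 0 and ŷᵢ₊₁-ŷᵢ ≤ zᵢ₊₁-zᵢ). Let f: ℝ → ℝ satisfy f(β) - f(α) ≥ β - α for all β ≥ α. Then ∑ᵢ₌₁^m (yᵢ - ŷᵢ)(f(ŷᵢ) - zᵢ) ≥ 0. -/

import Mathlib

private lemma quad_nonpos {σ c ε : ℝ} (hc : 0 < c) (hε : 0 < ε)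
    (h : ∀ t : ℝ, 0 ≤ t → t ≤ ε → 0 ≤ t ^ 2 * c - 2 * t * σ) : σ ≤ 0 := by
  by_contra hσ
  push_neg at hσ
  set t : ℝ := min ε (σ / c) with ht
  have ht0 : 0 < t := lt_min hε (div_pos hσ hc)
  have htε : t ≤ ε := min_le_left _ _
  have htσ : t * c ≤ σ := by
    have : t ≤ σ / c := min_le_right _ _
    calc t * c ≤ (σ / c) * c := by nlinarith
    _ = σ := div_mul_cancel₀ _ hc.ne'
  have := h t ht0.le htε
  nlinarith

private lemma quad_nonneg {σ c ε : ℝ} (hc : 0 < c) (hε : 0 < ε)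
    (h : ∀ t : ℝ, -ε ≤ t → t ≤ 0 → 0 ≤ t ^ 2 * c - 2 * t * σ) : 0 ≤ σ := by
  have : -σ ≤ 0 := by
    refine quad_nonpos hc hε (fun t h0 htε => ?_)
    have := h (-t) (by linarith) (by linarith)
    nlinarith
  linarith

/-- Expansion of the objective along a perturbation in direction of the indicator of `P`. -/
private lemma key {m : ℕ} (z y yhat : Fin m → ℝ)
    (hmin : ∀ v : Fin m → ℝ,
      (∀ i j : Fin m, i ≤ j → v i ≤ v j ∧ v j - v i ≤ z j - z i) →
      ∑ i, (yhat i - y i) ^ 2 ≤ ∑ i, (v i - y i) ^ 2)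
    (P : Fin m → Prop) [DecidablePred P] (t : ℝ)
    (hfv : ∀ i j : Fin m, i ≤ j →
      (yhat i + if P i then t else 0) ≤ (yhat j + if P j then t else 0) ∧
      (yhat j + if P j then t else 0) - (yhat i + if P i then t else 0) ≤ z j - z i) :
    0 ≤ t ^ 2 * (Finset.univ.filter P).card
        - 2 * t * ∑ j ∈ Finset.univ.filter P, (y j - yhat j) := by
  have h1 := hmin (fun j => yhat j + if P j then t else 0) hfv
  have h2 : ∑ i, ((yhat i + if P i then t else 0) - y i) ^ 2
      = ∑ i, (yhat i - y i) ^ 2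
        + ∑ i, (if P i then t ^ 2 - 2 * t * (y i - yhat i) else 0) := by
    rw [← Finset.sum_add_distrib]
    refine Finset.sum_congr rfl fun i _ => ?_
    split_ifs <;> ring
  have h3 : ∑ i, (if P i then t ^ 2 - 2 * t * (y i - yhat i) else 0)
      = t ^ 2 * (Finset.univ.filter P).card
        - 2 * t * ∑ j ∈ Finset.univ.filter P, (y j - yhat j) := by
    rw [← Finset.sum_filter, Finset.sum_sub_distrib, Finset.sum_const, nsmul_eq_mul,
      ← Finset.mul_sum]
    ring
  rw [h2, h3] at h1
  linarith


private lemma sigma_nonneg {m : ℕ} (z y yhat : Fin m → ℝ)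
    (hfeas : ∀ i j : Fin m, i ≤ j → yhat i ≤ yhat j ∧ yhat j - yhat i ≤ z j - z i)
    (hmin : ∀ v : Fin m → ℝ,
      (∀ i j : Fin m, i ≤ j → v i ≤ v j ∧ v j - v i ≤ z j - z i) →
      ∑ i, (yhat i - y i) ^ 2 ≤ ∑ i, (v i - y i) ^ 2)
    (k kp : Fin m) (hkp : (kp : ℕ) + 1 = (k : ℕ)) (hg : yhat kp < yhat k) :
    0 ≤ ∑ j ∈ Finset.univ.filter (fun j => k ≤ j), (y j - yhat j) := by
  have hcard : 0 < ((Finset.univ.filter (fun j => k ≤ j)).card : ℝ) := by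
    have : k ∈ Finset.univ.filter (fun j => k ≤ j) := by simp
    exact_mod_cast Finset.card_pos.2 ⟨k, this⟩
  refine quad_nonneg hcard (sub_pos.2 hg) (fun t ht0 htε => ?_)
  refine key z y yhat hmin (fun j => k ≤ j) t (fun i j hij => ?_)
  by_cases hki : k ≤ i
  · have hkj : k ≤ j := le_trans hki hij
    simp only [if_pos hki, if_pos hkj]
    obtain ⟨h1, h2⟩ := hfeas i j hij
    constructor <;> linarith
  · by_cases hkj : k ≤ j
    · simp only [if_neg hki, if_pos hkj]
      have hik : i ≤ kp := by
        rw [Fin.le_def]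
        have : (i : ℕ) < (k : ℕ) := by
          rw [Fin.le_def] at hki; omega
        omega
      obtain ⟨h1, _⟩ := hfeas i kp hik
      obtain ⟨h2, _⟩ := hfeas k j hkj
      obtain ⟨h3, h4⟩ := hfeas i j hij
      constructor <;> linarith
    · simp only [if_neg hki, if_neg hkj]
      obtain ⟨h1, h2⟩ := hfeas i j hij
      constructor <;> linarith

private lemma sigma_nonpos {m : ℕ} (z y yhat : Fin m → ℝ)
    (hfeas : ∀ i j : Fin m, i ≤ j → yhat i ≤ yhat j ∧ yhat j - yhat i ≤ z j - z i)
    (hmin : ∀ v : Fin m → ℝ,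
      (∀ i j : Fin m, i ≤ j → v i ≤ v j ∧ v j - v i ≤ z j - z i) →
      ∑ i, (yhat i - y i) ^ 2 ≤ ∑ i, (v i - y i) ^ 2)
    (k kp : Fin m) (hkp : (kp : ℕ) + 1 = (k : ℕ))
    (hg : yhat k - yhat kp < z k - z kp) :
    ∑ j ∈ Finset.univ.filter (fun j => k ≤ j), (y j - yhat j) ≤ 0 := by
  have hcard : 0 < ((Finset.univ.filter (fun j => k ≤ j)).card : ℝ) := by
    have : k ∈ Finset.univ.filter (fun j => k ≤ j) := by simp
    exact_mod_cast Finset.card_pos.2 ⟨k, this⟩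
  refine quad_nonpos hcard (sub_pos.2 hg) (fun t ht0 htε => ?_)
  refine key z y yhat hmin (fun j => k ≤ j) t (fun i j hij => ?_)
  by_cases hki : k ≤ i
  · have hkj : k ≤ j := le_trans hki hij
    simp only [if_pos hki, if_pos hkj]
    obtain ⟨h1, h2⟩ := hfeas i j hij
    constructor <;> linarith
  · by_cases hkj : k ≤ j
    · simp only [if_neg hki, if_pos hkj]
      have hik : i ≤ kp := by
        rw [Fin.le_def]
        have : (i : ℕ) < (k : ℕ) := by
          rw [Fin.le_def] at hki; omega
        omega
      obtain ⟨_, h1⟩ := hfeas i kp hik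
      obtain ⟨_, h2⟩ := hfeas k j hkj
      obtain ⟨h3, h4⟩ := hfeas i j hij
      obtain ⟨h5, _⟩ := hfeas kp k (by rw [Fin.le_def]; omega)
      constructor <;> linarith
    · simp only [if_neg hki, if_neg hkj]
      obtain ⟨h1, h2⟩ := hfeas i j hij
      constructor <;> linarith

private lemma sigma_total {m : ℕ} (z y yhat : Fin m → ℝ) (hm : 0 < m)
    (hmin : ∀ v : Fin m → ℝ,
      (∀ i j : Fin m, i ≤ j → v i ≤ v j ∧ v j - v i ≤ z j - z i) →
      ∑ i, (yhat i - y i) ^ 2 ≤ ∑ i, (v i - y i) ^ 2)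
    (hfeas : ∀ i j : Fin m, i ≤ j → yhat i ≤ yhat j ∧ yhat j - yhat i ≤ z j - z i) :
    ∑ i, (y i - yhat i) = 0 := by
  have hcard : 0 < ((Finset.univ.filter (fun _ : Fin m => True)).card : ℝ) := by
    simp [Finset.filter_true, Finset.card_univ]
    exact_mod_cast hm
  have hq : ∀ t : ℝ, 0 ≤ t ^ 2 * ((Finset.univ.filter (fun _ : Fin m => True)).card : ℝ)
      - 2 * t * ∑ j ∈ Finset.univ.filter (fun _ : Fin m => True), (y j - yhat j) := by
    intro t
    refine key z y yhat hmin (fun _ => True) t (fun i j hij => ?_)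
    simp only [if_pos trivial]
    obtain ⟨h1, h2⟩ := hfeas i j hij
    constructor <;> linarith
  have h1 : ∑ j ∈ Finset.univ.filter (fun _ : Fin m => True), (y j - yhat j) ≤ 0 :=
    quad_nonpos hcard one_pos (fun t _ _ => hq t)
  have h2 : 0 ≤ ∑ j ∈ Finset.univ.filter (fun _ : Fin m => True), (y j - yhat j) :=
    quad_nonneg hcard one_pos (fun t _ _ => hq t)
  have := le_antisymm h1 h2
  simpa [Finset.filter_true] using this

/-- LPAV property lemma: if `ŷ` minimizes `∑ (v i - y i)²` over the set of vectors
that are non-decreasing and Lipschitz with respect to the sorted inputs `z`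
(i.e. `0 ≤ v j - v i ≤ z j - z i` for `i ≤ j`), and `f` is expansive
(`f β - f α ≥ β - α` for `β ≥ α`), then `∑ (y i - ŷ i)(f (ŷ i) - z i) ≥ 0`. -/
theorem stmt4 {m : ℕ} (z y yhat : Fin m → ℝ)
    (hz : Monotone z) (hy : ∀ i, y i ∈ Set.Icc (0 : ℝ) 1)
    (hfeas : ∀ i j : Fin m, i ≤ j → yhat i ≤ yhat j ∧ yhat j - yhat i ≤ z j - z i)
    (hmin : ∀ v : Fin m → ℝ,
      (∀ i j : Fin m, i ≤ j → v i ≤ v j ∧ v j - v i ≤ z j - z i) →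
      ∑ i, (yhat i - y i) ^ 2 ≤ ∑ i, (v i - y i) ^ 2)
    (f : ℝ → ℝ) (hf : ∀ α β : ℝ, α ≤ β → β - α ≤ f β - f α) :
    0 ≤ ∑ i, (y i - yhat i) * (f (yhat i) - z i) := by
  rcases Nat.eq_zero_or_pos m with hm | hm
  · subst hm; simp
  set A : ℕ → ℝ := fun n => if h : n < m then y ⟨n, h⟩ - yhat ⟨n, h⟩ else 0 with hA
  set B : ℕ → ℝ := fun n => if h : n < m then f (yhat ⟨n, h⟩) - z ⟨n, h⟩ else 0 with hB
  have hgoal : ∑ i, (y i - yhat i) * (f (yhat i) - z i)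
      = ∑ n ∈ Finset.range m, B n * A n := by
    rw [← Fin.sum_univ_eq_sum_range (fun n => B n * A n) m]
    refine Finset.sum_congr rfl fun i _ => ?_
    simp only [hA, hB, dif_pos i.isLt, Fin.eta]
    ring
  have htot : ∑ n ∈ Finset.range m, A n = 0 := by
    rw [← Fin.sum_univ_eq_sum_range (fun n => A n) m]
    rw [← sigma_total z y yhat hm hmin hfeas]
    exact Finset.sum_congr rfl fun i _ => by simp only [hA, dif_pos i.isLt, Fin.eta]
  have habel := Finset.sum_range_by_parts B A m
  rw [htot, smul_zero, zero_sub] at habel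
  simp only [smul_eq_mul] at habel
  rw [hgoal, habel, le_neg, neg_zero]
  refine Finset.sum_nonpos fun i hi => ?_
  have him : i + 1 < m := by
    have := Finset.mem_range.1 hi; omega
  set k : Fin m := ⟨i + 1, him⟩ with hk
  set kp : Fin m := ⟨i, by omega⟩ with hkp
  set σ : ℝ := ∑ j ∈ Finset.univ.filter (fun j => k ≤ j), (y j - yhat j) with hσ
  have hT : ∑ j ∈ Finset.range (i + 1), A j = -σ := by
    have hIco : ∑ j ∈ Finset.Ico (i + 1) m, A j = σ := by
      have e1 : σ = ∑ j : Fin m, if k ≤ j then y j - yhat j else 0 :=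
        Finset.sum_filter _ _
      have e2 : ∑ j : Fin m, (if k ≤ j then y j - yhat j else 0)
          = ∑ n ∈ Finset.range m, (if i + 1 ≤ n then A n else 0) := by
        rw [← Fin.sum_univ_eq_sum_range (fun n => if i + 1 ≤ n then A n else 0) m]
        refine Finset.sum_congr rfl fun j _ => ?_
        by_cases hj : k ≤ j
        · rw [if_pos hj, if_pos (by rw [Fin.le_def] at hj; exact hj)]
          simp only [hA, dif_pos j.isLt, Fin.eta]
        · rw [if_neg hj, if_neg (by rw [Fin.le_def] at hj; exact hj)]
      have e3 : ∑ n ∈ Finset.range m, (if i + 1 ≤ n then A n else 0)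
          = ∑ j ∈ Finset.Ico (i + 1) m, A j := by
        rw [eq_comm]
        have hsub : Finset.Ico (i + 1) m ⊆ Finset.range m := by
          intro x hx
          simp only [Finset.mem_Ico] at hx
          exact Finset.mem_range.2 hx.2
        rw [show (∑ j ∈ Finset.Ico (i + 1) m, A j)
            = ∑ j ∈ Finset.Ico (i + 1) m, (if i + 1 ≤ j then A j else 0) from
          Finset.sum_congr rfl fun x hx => (if_pos (Finset.mem_Ico.1 hx).1).symm]
        refine Finset.sum_subset hsub fun x hx hnx => ?_
        refine if_neg fun hc => hnx ?_
        exact Finset.mem_Ico.2 ⟨hc, Finset.mem_range.1 hx⟩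
      rw [e1, e2, e3]
    have hsplit : (∑ j ∈ Finset.range (i + 1), A j) + ∑ j ∈ Finset.Ico (i + 1) m, A j
        = ∑ j ∈ Finset.range m, A j := by
      rw [Finset.range_eq_Ico, Finset.range_eq_Ico]
      exact Finset.sum_Ico_consecutive A (by omega : 0 ≤ i + 1) (by omega : i + 1 ≤ m)
    rw [hIco, htot] at hsplit
    linarith
  have hBk : B (i + 1) = f (yhat k) - z k := by
    simp only [hB, dif_pos him]
    rfl
  have hBi : B i = f (yhat kp) - z kp := by
    simp only [hB, dif_pos (show i < m by omega)]
    rfl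
  rw [hT, hBk, hBi]
  have hpk : kp ≤ k := by rw [Fin.le_def]; simp [hk, hkp]
  obtain ⟨hmono, hlip⟩ := hfeas kp k hpk
  rcases eq_or_lt_of_le hmono with heq | hlt
  · have hfeq : f (yhat kp) = f (yhat k) := by rw [heq]
    rcases eq_or_lt_of_le hlip with heq2 | hlt2
    · have hfac : f (yhat k) - z k - (f (yhat kp) - z kp) = 0 := by linarith
      rw [hfac]; simp
    · have hσle : σ ≤ 0 := sigma_nonpos z y yhat hfeas hmin k kp rfl hlt2
      have hfac : f (yhat k) - z k - (f (yhat kp) - z kp) ≤ 0 := by linarith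
      exact mul_nonpos_of_nonpos_of_nonneg hfac (by linarith)
  · have hσge : 0 ≤ σ := sigma_nonneg z y yhat hfeas hmin k kp rfl hlt
    rcases eq_or_lt_of_le hlip with heq2 | hlt2
    · have hfac : 0 ≤ f (yhat k) - z k - (f (yhat kp) - z kp) := by
        have := hf (yhat kp) (yhat k) hlt.le
        linarith
      exact mul_nonpos_of_nonneg_of_nonpos hfac (by linarith)
    · have hσle : σ ≤ 0 := sigma_nonpos z y yhat hfeas hmin k kp rfl hlt2
      have : σ = 0 := le_antisymm hσle hσge
      rw [this]; simp
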